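/- Let m be a positive integer and set D = m² + 1. If v and w are coprime positive integers and N is an integer with v² − D·w² = N and 0 < |N| < √D, then N = 1 or N = −1. -/
import Mathlib

private lemma pell_aux (m : ℤ) (hm : 0 < m) :
    ∀ w : ℕ, ∀ v N : ℤ, 0 < w → 0 < v → IsCoprime v (w : ℤ) →
      v ^ 2 - (m ^ 2 + 1) * (w : ℤ) ^ 2 = N → N ≠ 0 → N ^ 2 ≤ m ^ 2 →
      N = 1 ∨ N = -1 := by
  intro w
  induction w using Nat.strong_induction_on with
  | _ w ih =>
    intro v N hw hv hcop h hN0 hNsq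
    have hw1 : (1 : ℤ) ≤ (w : ℤ) := by exact_mod_cast hw
    have hNle : N ≤ m := by nlinarith [sq_nonneg (N - m)]
    have hNge : -m ≤ N := by nlinarith [sq_nonneg (N + m)]
    set b : ℤ := (w : ℤ) * m - v with hb
    set a : ℤ := v * m - (w : ℤ) * (m ^ 2 + 1) with ha
    have hnorm : a ^ 2 - (m ^ 2 + 1) * b ^ 2 = -N := by linear_combination -h
    -- bounds: w*(m-1) < v < w*(m+1)
    have hlow : (w : ℤ) * (m - 1) < v := by nlinarith [mul_pos hm hm, sq_nonneg ((w:ℤ) * (m-1) - v)]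
    have hc : (0:ℤ) < (w : ℤ) * (m + 1) := by positivity
    have hhigh : v < (w : ℤ) * (m + 1) := by
      by_contra hcon
      push_neg at hcon
      nlinarith [mul_le_mul hcon hcon hc.le (hc.le.trans hcon)]
    have hbw : -(w : ℤ) < b ∧ b < (w : ℤ) := by constructor <;> [linarith; linarith]
    -- coprimality of a and b
    have hcop' : IsCoprime a b := by
      obtain ⟨u, t, hut⟩ := hcop
      exact ⟨-u * m - t, -u * (m ^ 2 + 1) - t * m, by linear_combination hut⟩
    by_cases hb0 : b = 0
    · -- v = w * m, coprimality forces w = 1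
      have hvw : v = (w : ℤ) * m := by linarith [hb0, hb ▸ hb0]
      have hwdvd : (w : ℤ) ∣ v := ⟨m, hvw⟩
      have hwu : IsUnit (w : ℤ) := hcop.symm.isUnit_of_dvd' dvd_rfl hwdvd
      have hw1' : (w : ℤ) = 1 := by
        rcases Int.isUnit_iff.mp hwu with h1 | h1
        · exact h1
        · omega
      right
      have : v = m := by rw [hvw, hw1', one_mul]
      rw [hw1', this] at h
      linarith
    · -- descent
      have ha0 : a ≠ 0 := by
        intro h0
        rw [h0] at hnorm
        have hb1 : 1 ≤ b ^ 2 := by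
          rcases lt_or_gt_of_ne hb0 with h' | h' <;> nlinarith
        nlinarith
      set w' : ℕ := b.natAbs with hw'
      have hw'lt : w' < w := by omega
      have hw'pos : 0 < w' := by omega
      have hbcast : ((w' : ℕ) : ℤ) = |b| := Int.natCast_natAbs b
      have hcopab : IsCoprime |a| ((w' : ℕ) : ℤ) := by
        rw [hbcast]
        rcases abs_cases a with ⟨h1, _⟩ | ⟨h1, _⟩ <;> rcases abs_cases b with ⟨h2, _⟩ | ⟨h2, _⟩ <;>
          rw [h1, h2]
        · exact hcop'
        · exact hcop'.neg_right
        · exact hcop'.neg_left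
        · exact hcop'.neg_left.neg_right
      have hnorm' : |a| ^ 2 - (m ^ 2 + 1) * ((w' : ℕ) : ℤ) ^ 2 = -N := by
        rw [hbcast, sq_abs, sq_abs]; exact hnorm
      have := ih w' hw'lt |a| (-N) hw'pos (abs_pos.mpr ha0) hcopab hnorm'
        (by simpa using hN0) (by simpa using hNsq)
      rcases this with h' | h'
      · right; linarith
      · left; linarith

theorem pell_small_norm_eq_pm_one
    (m : ℕ) (hm : 0 < m) (D : ℕ) (hD : D = m ^ 2 + 1)
    (v w : ℕ) (hv : 0 < v) (hw : 0 < w) (hcop : Nat.gcd v w = 1)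
    (N : ℤ) (hN : (v : ℤ) ^ 2 - (D : ℤ) * (w : ℤ) ^ 2 = N)
    (hN0 : N ≠ 0) (hNs : (|N| : ℝ) < Real.sqrt D) :
    N = 1 ∨ N = -1 := by
  have hDpos : (0:ℝ) ≤ (D : ℝ) := by positivity
  have hsq : ((N : ℝ)) ^ 2 < (D : ℝ) := by
    nlinarith [hNs, Real.sq_sqrt hDpos, Real.sqrt_nonneg (D:ℝ), abs_nonneg ((N:ℤ):ℝ),
      sq_abs ((N:ℤ):ℝ)]
  have hsqZ : N ^ 2 < (D : ℤ) := by exact_mod_cast hsq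
  have hNsq : N ^ 2 ≤ (m : ℤ) ^ 2 := by
    have hDm : (D : ℤ) = (m : ℤ) ^ 2 + 1 := by rw [hD]; push_cast; ring
    rw [hDm] at hsqZ
    exact Int.lt_add_one_iff.mp hsqZ
  have hcop' : IsCoprime (v : ℤ) (w : ℤ) := by
    rw [Int.isCoprime_iff_gcd_eq_one, Int.gcd_natCast_natCast]
    exact hcop
  have hnorm : (v : ℤ) ^ 2 - ((m : ℤ) ^ 2 + 1) * (w : ℤ) ^ 2 = N := by
    rw [← hN, hD]; push_cast; ring
  exact pell_aux (m : ℤ) (by exact_mod_cast hm) w (v : ℤ) N hw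
    (by exact_mod_cast hv) hcop' hnorm hN0 hNsq
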